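/- For every integer k ≥ 4, let V be the set of variables q_{v,w}, z_{v,w} (v∈[k], w∈[k−1]) of TPHP and let H be the downward-closed family of all subsets X ⊆ V that mention at most k−1 pigeons. Then the set P of polynomial inequalities encoding the clauses of TPHP admits an H-consistent family of distributions. -/

import Mathlib

namespace NarrowProofs

open MvPolynomial

/-- A clause is a finite set of literals; a literal is a variable together with a
sign (`true` = positive literal, `false` = negative literal). -/
abbrev Clause (V : Type) := Finset (V × Bool)

/-- The SA encoding (truth = 1) of a clause:
`∑_{i∈I} x_i + ∑_{j∈J} (1−x_j) − 1`. -/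
noncomputable def encodeIneqSA {V : Type} [DecidableEq V] (C : Clause V) :
    MvPolynomial V ℝ :=
  (∑ l ∈ C, if l.2 then X l.1 else (1 - X l.1)) - 1

/-- The variables of the 3-CNF pigeonhole principle `TPHP`: `q v w` and `z v w`
mention pigeon `v`. -/
inductive TVar where
  | q (v w : ℕ)
  | z (v w : ℕ)
deriving DecidableEq

/-- The pigeon mentioned by a variable of `TPHP`. -/
def TVar.pigeon : TVar → ℕ
  | .q v _ => v
  | .z v _ => v

/-- The 3-CNF pigeonhole principle formula with `k` pigeons and `k-1` holes
(1-based indices). -/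
def TPHP (k : ℕ) : Set (Clause TVar) :=
  { C |
    (∃ v, 1 ≤ v ∧ v ≤ k ∧
      C = {(TVar.q v 1, true), (TVar.z v 1, true)}) ∨
    (∃ v w, 1 ≤ v ∧ v ≤ k ∧ 1 ≤ w ∧ w ≤ k - 4 ∧
      C = {(TVar.z v w, false), (TVar.q v (w+1), true), (TVar.z v (w+1), true)}) ∨
    (∃ v, 1 ≤ v ∧ v ≤ k ∧
      C = {(TVar.z v (k-3), false), (TVar.q v (k-2), true), (TVar.q v (k-1), true)}) ∨
    (∃ v v' w, 1 ≤ v ∧ v ≤ k ∧ 1 ≤ v' ∧ v' ≤ k ∧ v ≠ v' ∧ 1 ≤ w ∧ w ≤ k - 1 ∧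
      C = {(TVar.q v w, false), (TVar.q v' w, false)}) }

/-- `H` is a downward-closed family of (finite) sets of variables. -/
def downwardClosed {V : Type} (H : Set (Finset V)) : Prop :=
  ∀ X Y : Finset V, Y ∈ H → X ⊆ Y → X ∈ H

/-- A polynomial is `H`-bounded if the variable set of each of its monomials
belongs to `H`. -/
def HBounded {V : Type} (H : Set (Finset V)) (p : MvPolynomial V ℝ) : Prop :=
  ∀ m ∈ p.support, m.support ∈ H

/-- The 0/1-valued total assignment extending `μ : {0,1}^X` by zero. -/
noncomputable def assignOf {V : Type} [DecidableEq V] (X : Finset V)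
    (μ : {x // x ∈ X} → Bool) : V → ℝ :=
  fun v => if h : v ∈ X then (if μ ⟨v, h⟩ then 1 else 0) else 0

/-- `P` admits an `H`-consistent family of distributions: probability
distributions `Π_X` on `{0,1}^X` for each `X ∈ H` such that (H1) for every
`X ∈ H` and every inequality `q ≥ 0` of `P` with all variables in `X`, every
assignment in the support of `Π_X` satisfies `q ≥ 0`, and (H2) for `X ⊆ Y`
both in `H`, `Π_X` is the marginal of `Π_Y`. -/
def HConsistent (V : Type) [DecidableEq V] (H : Set (Finset V))
    (P : Set (MvPolynomial V ℝ)) : Prop :=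
  ∃ Pi : (X : Finset V) → ({x // x ∈ X} → Bool) → ℝ,
    (∀ X, X ∈ H → (∀ μ, 0 ≤ Pi X μ) ∧ (∑ μ : {x // x ∈ X} → Bool, Pi X μ) = 1) ∧
    (∀ X, X ∈ H → ∀ q ∈ P, q.vars ⊆ X → ∀ μ, 0 < Pi X μ →
      0 ≤ MvPolynomial.eval (assignOf X μ) q) ∧
    (∀ X Y : Finset V, X ∈ H → Y ∈ H → ∀ hXY : X ⊆ Y, ∀ μ,
      Pi X μ = ∑ η : {x // x ∈ Y} → Bool,
        (if (fun v : {x // x ∈ X} => η ⟨v.1, hXY v.2⟩) = μ then Pi Y η else 0))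

/-- Validity of a variable of `TPHP`: `q v w` and `z v w` with `v ∈ [k]` and
`w ∈ [k−1]`. -/
def TVar.valid (k : ℕ) : TVar → Prop
  | .q v w => 1 ≤ v ∧ v ≤ k ∧ 1 ≤ w ∧ w ≤ k - 1
  | .z v w => 1 ≤ v ∧ v ≤ k ∧ 1 ≤ w ∧ w ≤ k - 1

lemma exists_perm_comp {α : Type} [Fintype α] {β : Type} [Fintype β] [DecidableEq β]
    (e e' : α ↪ β) : ∃ τ : Equiv.Perm β, ∀ a, τ (e a) = e' a := by
  classical
  have hcard : Fintype.card ((Set.range ⇑e)ᶜ : Set β) = Fintype.card ((Set.range ⇑e')ᶜ : Set β) := by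
    rw [Fintype.card_compl_set, Fintype.card_compl_set, Set.card_range_of_injective e.injective,
      Set.card_range_of_injective e'.injective]
  let e₀ : (Set.range ⇑e : Set β) ≃ (Set.range ⇑e' : Set β) :=
    (Equiv.ofInjective _ e.injective).symm.trans (Equiv.ofInjective _ e'.injective)
  let e₁ : ((Set.range ⇑e)ᶜ : Set β) ≃ ((Set.range ⇑e')ᶜ : Set β) := Fintype.equivOfCardEq hcard
  obtain ⟨τ, hτ⟩ := (Equiv.Set.compl e₀).symm e₁
  refine ⟨τ, fun a => ?_⟩
  have h1 := hτ ⟨e a, Set.mem_range_self a⟩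
  rw [h1]
  have h2 : (⟨e a, Set.mem_range_self a⟩ : Set.range ⇑e) = Equiv.ofInjective _ e.injective a := by
    rw [Equiv.ofInjective_apply]
  show ((e₀ ⟨e a, Set.mem_range_self a⟩ : Set.range ⇑e') : β) = e' a
  rw [h2]
  show ((Equiv.ofInjective _ e'.injective ((Equiv.ofInjective _ e.injective).symm
      (Equiv.ofInjective _ e.injective a)) : Set.range ⇑e') : β) = e' a
  rw [Equiv.symm_apply_apply, Equiv.ofInjective_apply]

/-- The Boolean value of a variable given a hole assignment (pigeon `v` sits in
hole `hole v`): `q v w` is true iff `hole v = w`, `z v w` is true iff `w < hole v`. -/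
def valB (hole : ℕ → ℕ) : TVar → Bool
  | .q v w => decide (hole v = w)
  | .z v w => decide (w < hole v)

lemma valB_congr {h h' : ℕ → ℕ} (x : TVar) (hx : h x.pigeon = h' x.pigeon) :
    valB h x = valB h' x := by
  cases x <;> simp only [valB, TVar.pigeon] at hx ⊢ <;> rw [hx]

def holeFun (m : ℕ) (S : Finset ℕ) (e : {a // a ∈ S} ↪ Fin m)
    (σ : Equiv.Perm (Fin m)) : ℕ → ℕ :=
  fun v => if h : v ∈ S then (σ (e ⟨v, h⟩)).val + 1 else 0

def asgn (m : ℕ) (X : Finset TVar) (e : {a // a ∈ X.image TVar.pigeon} ↪ Fin m)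
    (σ : Equiv.Perm (Fin m)) : {x // x ∈ X} → Bool :=
  fun x => valB (holeFun m (X.image TVar.pigeon) e σ) x.1

def cnt (m : ℕ) (X : Finset TVar) (e : {a // a ∈ X.image TVar.pigeon} ↪ Fin m)
    (μ : {x // x ∈ X} → Bool) : ℕ :=
  (Finset.univ.filter (fun σ : Equiv.Perm (Fin m) => asgn m X e σ = μ)).card

lemma asgn_comp (m : ℕ) (X : Finset TVar) (e e' : {a // a ∈ X.image TVar.pigeon} ↪ Fin m)
    (τ : Equiv.Perm (Fin m)) (h : ∀ a, τ (e a) = e' a) (σ : Equiv.Perm (Fin m)) :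
    asgn m X e (σ * τ) = asgn m X e' σ := by
  funext x
  unfold asgn
  apply valB_congr
  unfold holeFun
  by_cases hp : x.1.pigeon ∈ X.image TVar.pigeon
  · rw [dif_pos hp, dif_pos hp, Equiv.Perm.mul_apply, h]
  · rw [dif_neg hp, dif_neg hp]

lemma cnt_eq (m : ℕ) (X : Finset TVar) (e e' : {a // a ∈ X.image TVar.pigeon} ↪ Fin m)
    (μ : {x // x ∈ X} → Bool) : cnt m X e μ = cnt m X e' μ := by
  obtain ⟨τ, hτ⟩ := exists_perm_comp e e'
  unfold cnt
  apply Finset.card_bij' (fun σ _ => σ * τ⁻¹) (fun σ _ => σ * τ)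
  · intro σ hσ
    simp only [Finset.mem_filter, Finset.mem_univ, true_and] at hσ ⊢
    rw [← asgn_comp m X e e' τ hτ (σ * τ⁻¹)]
    have hst : σ * τ⁻¹ * τ = σ := by group
    rw [hst]; exact hσ
  · intro σ hσ
    simp only [Finset.mem_filter, Finset.mem_univ, true_and] at hσ ⊢
    rw [asgn_comp m X e e' τ hτ σ]
    exact hσ
  · intro σ _; group
  · intro σ _; group

lemma sum_cnt (m : ℕ) (X : Finset TVar) (e : {a // a ∈ X.image TVar.pigeon} ↪ Fin m) :
    ∑ μ : {x // x ∈ X} → Bool, cnt m X e μ = Fintype.card (Equiv.Perm (Fin m)) := by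
  have h := Finset.card_eq_sum_card_fiberwise
    (s := (Finset.univ : Finset (Equiv.Perm (Fin m))))
    (t := (Finset.univ : Finset ({x // x ∈ X} → Bool))) (f := asgn m X e)
    (fun x _ => Finset.mem_univ _)
  simpa [cnt, Finset.card_univ] using h.symm

noncomputable def embOf (m : ℕ) (S : Finset ℕ) (h : S.card ≤ m) : {a // a ∈ S} ↪ Fin m :=
  Classical.choice (Function.Embedding.nonempty_of_card_le (by simpa using h))

noncomputable def PiD (k : ℕ) (X : Finset TVar) : ({x // x ∈ X} → Bool) → ℝ :=
  if h : (X.image TVar.pigeon).card ≤ k - 1 then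
    fun μ => (cnt (k-1) X (embOf (k-1) _ h) μ : ℝ) / (Fintype.card (Equiv.Perm (Fin (k-1))) : ℝ)
  else fun _ => 0

lemma eval_encode (a : TVar → ℝ) (C : Clause TVar) :
    MvPolynomial.eval a (encodeIneqSA C)
      = (∑ l ∈ C, if l.2 then a l.1 else 1 - a l.1) - 1 := by
  unfold encodeIneqSA
  rw [map_sub, map_sum, map_one]
  congr 1
  refine Finset.sum_congr rfl fun l _ => ?_
  split <;> simp

lemma mem_vars_encode {C : Clause TVar}
    (hinj : ∀ l ∈ C, ∀ l' ∈ C, l.1 = l'.1 → l = l')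
    {l : TVar × Bool} (hl : l ∈ C) : l.1 ∈ (encodeIneqSA C).vars := by
  classical
  have hcoeff : MvPolynomial.coeff (Finsupp.single l.1 1) (encodeIneqSA C)
      = if l.2 then 1 else -1 := by
    unfold encodeIneqSA
    rw [MvPolynomial.coeff_sub, MvPolynomial.coeff_sum]
    have hs0 : (Finsupp.single l.1 1 : TVar →₀ ℕ) ≠ 0 := by simp
    have h1 : MvPolynomial.coeff (R := ℝ) (Finsupp.single l.1 1) 1 = 0 := by
      rw [MvPolynomial.coeff_one]
      simp [Ne.symm hs0]
    rw [h1, sub_zero, Finset.sum_eq_single l]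
    · rcases hb : l.2 <;>
        simp [hb, MvPolynomial.coeff_X', MvPolynomial.coeff_one, Ne.symm hs0]
    · intro l' hl' hne
      have hne1 : l'.1 ≠ l.1 := fun h => hne (hinj l' hl' l hl h)
      have hne2 : Finsupp.single l'.1 (1:ℕ) ≠ Finsupp.single l.1 1 := by
        intro h
        exact hne1 (Finsupp.single_left_injective one_ne_zero h)
      rcases hb : l'.2 <;>
        simp [hb, MvPolynomial.coeff_X', MvPolynomial.coeff_one, hne2, Ne.symm hs0]
    · intro h; exact absurd hl h
  have hne : MvPolynomial.coeff (Finsupp.single l.1 1) (encodeIneqSA C) ≠ 0 := by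
    rw [hcoeff]; split <;> norm_num
  rw [MvPolynomial.mem_vars]
  exact ⟨_, MvPolynomial.mem_support_iff.mpr hne, by simp⟩

lemma eval_ge_of_sat (X : Finset TVar) (μ : {x // x ∈ X} → Bool) (C : Clause TVar)
    (hsat : ∃ l ∈ C, ∃ hx : l.1 ∈ X, μ ⟨l.1, hx⟩ = l.2) :
    0 ≤ MvPolynomial.eval (assignOf X μ) (encodeIneqSA C) := by
  rw [eval_encode]
  have h01 : ∀ t, 0 ≤ assignOf X μ t ∧ assignOf X μ t ≤ 1 := by
    intro t
    unfold assignOf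
    split
    · split <;> norm_num
    · norm_num
  obtain ⟨l, hlC, hx, hμ⟩ := hsat
  have hterm : (if l.2 then assignOf X μ l.1 else 1 - assignOf X μ l.1) = 1 := by
    have ha : assignOf X μ l.1 = if μ ⟨l.1, hx⟩ then 1 else 0 := by
      unfold assignOf; rw [dif_pos hx]
    rcases hb : l.2 <;> rw [hb] at hμ <;> simp [hb, ha, hμ]
  have hnn : ∀ i ∈ C, 0 ≤ (fun l : TVar × Bool =>
      if l.2 then assignOf X μ l.1 else 1 - assignOf X μ l.1) i := by
    intro i _
    dsimp only
    split
    · exact (h01 i.1).1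
    · linarith [(h01 i.1).2]
  have h := Finset.single_le_sum hnn hlC
  rw [hterm] at h
  linarith


lemma inj_pair {a b : TVar} {sa sb : Bool} (hab : a ≠ b) :
    ∀ l ∈ ({(a,sa),(b,sb)} : Clause TVar), ∀ l' ∈ ({(a,sa),(b,sb)} : Clause TVar),
      l.1 = l'.1 → l = l' := by
  intro l hl l' hl' h
  simp only [Finset.mem_insert, Finset.mem_singleton] at hl hl'
  rcases hl with rfl | rfl <;> rcases hl' with rfl | rfl <;>
    first
      | rfl
      | exact absurd h hab
      | exact absurd h.symm hab

lemma inj_triple {a b c : TVar} {sa sb sc : Bool} (hab : a ≠ b) (hac : a ≠ c) (hbc : b ≠ c) :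
    ∀ l ∈ ({(a,sa),(b,sb),(c,sc)} : Clause TVar),
      ∀ l' ∈ ({(a,sa),(b,sb),(c,sc)} : Clause TVar),
      l.1 = l'.1 → l = l' := by
  intro l hl l' hl' h
  simp only [Finset.mem_insert, Finset.mem_singleton] at hl hl'
  rcases hl with rfl | rfl | rfl <;> rcases hl' with rfl | rfl | rfl <;>
    first
      | rfl
      | exact absurd h hab
      | exact absurd h.symm hab
      | exact absurd h hac
      | exact absurd h.symm hac
      | exact absurd h hbc
      | exact absurd h.symm hbc

set_option maxHeartbeats 1000000 in
/-- for every `k ≥ 4`, with `H` the downward-closed family of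
all sets of variables of `TPHP` mentioning at most `k−1` pigeons, the set `P`
of polynomial inequalities encoding the clauses of `TPHP` admits an
`H`-consistent family of distributions. -/
theorem tphp_admits_consistent_family (k : ℕ) (hk : 4 ≤ k) :
    HConsistent TVar
      {X : Finset TVar | (∀ x ∈ X, TVar.valid k x) ∧ (X.image TVar.pigeon).card ≤ k - 1}
      ((fun C => encodeIneqSA C) '' TPHP k) := by
  classical
  refine ⟨PiD k, ?_, ?_, ?_⟩
  · -- probability distributions
    intro Xs hXm
    have hXc : (Xs.image TVar.pigeon).card ≤ k - 1 := hXm.2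
    constructor
    · intro μ
      simp only [PiD, dif_pos hXc]
      positivity
    · simp only [PiD, dif_pos hXc]
      have hN : (0:ℝ) < (Fintype.card (Equiv.Perm (Fin (k-1))) : ℝ) := by
        exact_mod_cast Fintype.card_pos
      have hs : ∑ μ : {x // x ∈ Xs} → Bool,
          ((cnt (k-1) Xs (embOf (k-1) (Xs.image TVar.pigeon) hXc) μ : ℝ))
          = (Fintype.card (Equiv.Perm (Fin (k-1))) : ℝ) := by
        rw [← Nat.cast_sum, sum_cnt]
      rw [← Finset.sum_div, hs, div_self (ne_of_gt hN)]
  · -- H1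
    intro Xs hXm qp hq hvars μ hpos
    obtain ⟨C, hC, rfl⟩ := hq
    have hXc : (Xs.image TVar.pigeon).card ≤ k - 1 := hXm.2
    simp only [PiD, dif_pos hXc] at hpos
    set e := embOf (k-1) (Xs.image TVar.pigeon) hXc with he
    have hcpos : 0 < cnt (k-1) Xs e μ := by
      rcases Nat.eq_zero_or_pos (cnt (k-1) Xs e μ) with h | h
      · rw [h] at hpos; simp at hpos
      · exact h
    obtain ⟨σ, hσmem⟩ := Finset.card_pos.mp hcpos
    have hσ : asgn (k-1) Xs e σ = μ := (Finset.mem_filter.mp hσmem).2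
    set hole := holeFun (k-1) (Xs.image TVar.pigeon) e σ with hhole
    have hμval : ∀ (x : TVar) (hx : x ∈ Xs), μ ⟨x, hx⟩ = valB hole x := by
      intro x hx
      rw [← hσ, hhole]
      rfl
    have hb : ∀ p ∈ Xs.image TVar.pigeon, 1 ≤ hole p ∧ hole p ≤ k - 1 := by
      intro p hp
      rw [hhole]
      unfold holeFun
      rw [dif_pos hp]
      have := (σ (e ⟨p, hp⟩)).isLt
      omega
    have hinjh : ∀ p ∈ Xs.image TVar.pigeon, ∀ p' ∈ Xs.image TVar.pigeon,
        hole p = hole p' → p = p' := by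
      intro p hp p' hp' h
      rw [hhole] at h
      unfold holeFun at h
      rw [dif_pos hp, dif_pos hp'] at h
      have h2 : σ (e ⟨p, hp⟩) = σ (e ⟨p', hp'⟩) := Fin.ext (by omega)
      have h3 := e.injective (σ.injective h2)
      exact congrArg Subtype.val h3
    simp only [TPHP, Set.mem_setOf_eq] at hC
    rcases hC with ⟨v,hv1,hvk,rfl⟩ | ⟨v,w,hv1,hvk,hw1,hwk,rfl⟩ | ⟨v,hv1,hvk,rfl⟩ |
      ⟨v,v',w,hv1,hvk,hv'1,hv'k,hvv',hw1,hwk,rfl⟩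
    · -- clause q v 1 ∨ z v 1
      have hinjC := inj_pair (a := TVar.q v 1) (b := TVar.z v 1) (sa := true) (sb := true)
        (fun h => TVar.noConfusion h)
      have hq1 : TVar.q v 1 ∈ Xs :=
        hvars (mem_vars_encode hinjC (l := (TVar.q v 1, true)) (by simp))
      have hz1 : TVar.z v 1 ∈ Xs :=
        hvars (mem_vars_encode hinjC (l := (TVar.z v 1, true)) (by simp))
      have hpv : v ∈ Xs.image TVar.pigeon := Finset.mem_image.mpr ⟨_, hq1, rfl⟩
      obtain ⟨hb1, hb2⟩ := hb v hpv
      by_cases hcase : hole v = 1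
      · exact eval_ge_of_sat Xs μ _ ⟨(TVar.q v 1, true), by simp, hq1, by
          show μ ⟨TVar.q v 1, hq1⟩ = true
          rw [hμval _ hq1]; simp [valB, hcase]⟩
      · exact eval_ge_of_sat Xs μ _ ⟨(TVar.z v 1, true), by simp, hz1, by
          show μ ⟨TVar.z v 1, hz1⟩ = true
          rw [hμval _ hz1]; simp [valB]; omega⟩
    · -- clause ¬ z v w ∨ q v (w+1) ∨ z v (w+1)
      have hinjC := inj_triple (a := TVar.z v w) (b := TVar.q v (w+1)) (c := TVar.z v (w+1))
        (sa := false) (sb := true) (sc := true)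
        (fun h => TVar.noConfusion h)
        (by intro h; injection h with h1 h2; omega)
        (fun h => TVar.noConfusion h)
      have hz1 : TVar.z v w ∈ Xs :=
        hvars (mem_vars_encode hinjC (l := (TVar.z v w, false)) (by simp))
      have hq2 : TVar.q v (w+1) ∈ Xs :=
        hvars (mem_vars_encode hinjC (l := (TVar.q v (w+1), true)) (by simp))
      have hz2 : TVar.z v (w+1) ∈ Xs :=
        hvars (mem_vars_encode hinjC (l := (TVar.z v (w+1), true)) (by simp))
      have hpv : v ∈ Xs.image TVar.pigeon := Finset.mem_image.mpr ⟨_, hz1, rfl⟩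
      obtain ⟨hb1, hb2⟩ := hb v hpv
      by_cases h1 : w < hole v
      · by_cases h2 : hole v = w + 1
        · exact eval_ge_of_sat Xs μ _ ⟨(TVar.q v (w+1), true), by simp, hq2, by
            show μ ⟨TVar.q v (w+1), hq2⟩ = true
            rw [hμval _ hq2]; simp [valB, h2]⟩
        · exact eval_ge_of_sat Xs μ _ ⟨(TVar.z v (w+1), true), by simp, hz2, by
            show μ ⟨TVar.z v (w+1), hz2⟩ = true
            rw [hμval _ hz2]; simp [valB]; omega⟩
      · exact eval_ge_of_sat Xs μ _ ⟨(TVar.z v w, false), by simp, hz1, by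
          show μ ⟨TVar.z v w, hz1⟩ = false
          rw [hμval _ hz1]; simp [valB]; omega⟩
    · -- clause ¬ z v (k-3) ∨ q v (k-2) ∨ q v (k-1)
      have hinjC := inj_triple (a := TVar.z v (k-3)) (b := TVar.q v (k-2)) (c := TVar.q v (k-1))
        (sa := false) (sb := true) (sc := true)
        (fun h => TVar.noConfusion h)
        (fun h => TVar.noConfusion h)
        (by intro h; injection h with h1 h2; omega)
      have hz1 : TVar.z v (k-3) ∈ Xs :=
        hvars (mem_vars_encode hinjC (l := (TVar.z v (k-3), false)) (by simp))
      have hq2 : TVar.q v (k-2) ∈ Xs :=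
        hvars (mem_vars_encode hinjC (l := (TVar.q v (k-2), true)) (by simp))
      have hq3 : TVar.q v (k-1) ∈ Xs :=
        hvars (mem_vars_encode hinjC (l := (TVar.q v (k-1), true)) (by simp))
      have hpv : v ∈ Xs.image TVar.pigeon := Finset.mem_image.mpr ⟨_, hz1, rfl⟩
      obtain ⟨hb1, hb2⟩ := hb v hpv
      by_cases h1 : (k-3) < hole v
      · by_cases h2 : hole v = k-2
        · exact eval_ge_of_sat Xs μ _ ⟨(TVar.q v (k-2), true), by simp, hq2, by
            show μ ⟨TVar.q v (k-2), hq2⟩ = true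
            rw [hμval _ hq2]; simp [valB, h2]⟩
        · exact eval_ge_of_sat Xs μ _ ⟨(TVar.q v (k-1), true), by simp, hq3, by
            show μ ⟨TVar.q v (k-1), hq3⟩ = true
            rw [hμval _ hq3]; simp [valB]; omega⟩
      · exact eval_ge_of_sat Xs μ _ ⟨(TVar.z v (k-3), false), by simp, hz1, by
          show μ ⟨TVar.z v (k-3), hz1⟩ = false
          rw [hμval _ hz1]; simp [valB]; omega⟩
    · -- clause ¬ q v w ∨ ¬ q v' w
      have hinjC := inj_pair (a := TVar.q v w) (b := TVar.q v' w) (sa := false) (sb := false)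
        (by intro h; injection h with h1 h2; exact hvv' h1)
      have hq1 : TVar.q v w ∈ Xs :=
        hvars (mem_vars_encode hinjC (l := (TVar.q v w, false)) (by simp))
      have hq2 : TVar.q v' w ∈ Xs :=
        hvars (mem_vars_encode hinjC (l := (TVar.q v' w, false)) (by simp))
      have hpv : v ∈ Xs.image TVar.pigeon := Finset.mem_image.mpr ⟨_, hq1, rfl⟩
      have hpv' : v' ∈ Xs.image TVar.pigeon := Finset.mem_image.mpr ⟨_, hq2, rfl⟩
      by_cases hc : hole v = w
      · have hc' : hole v' ≠ w := by
          intro h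
          exact hvv' (hinjh v hpv v' hpv' (by rw [hc, h]))
        exact eval_ge_of_sat Xs μ _ ⟨(TVar.q v' w, false), by simp, hq2, by
          show μ ⟨TVar.q v' w, hq2⟩ = false
          rw [hμval _ hq2]; simp [valB, hc']⟩
      · exact eval_ge_of_sat Xs μ _ ⟨(TVar.q v w, false), by simp, hq1, by
          show μ ⟨TVar.q v w, hq1⟩ = false
          rw [hμval _ hq1]; simp [valB, hc]⟩
  · -- H2 : marginals
    intro Xs Ys hXm hYm hXY μ
    have hXc : (Xs.image TVar.pigeon).card ≤ k - 1 := hXm.2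
    have hYc : (Ys.image TVar.pigeon).card ≤ k - 1 := hYm.2
    have hPg : Xs.image TVar.pigeon ⊆ Ys.image TVar.pigeon := Finset.image_subset_image hXY
    set eY := embOf (k-1) (Ys.image TVar.pigeon) hYc with heY
    set eX : {a // a ∈ Xs.image TVar.pigeon} ↪ Fin (k-1) :=
      ⟨fun a => eY ⟨a.1, hPg a.2⟩, by
        intro a b hab
        have h : (⟨a.1, hPg a.2⟩ : {a // a ∈ Ys.image TVar.pigeon}) = ⟨b.1, hPg b.2⟩ :=
          eY.injective hab
        have h2 : a.1 = b.1 := Subtype.mk_eq_mk.mp h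
        exact Subtype.ext h2⟩ with heX
    have hres : ∀ σ : Equiv.Perm (Fin (k-1)),
        (fun v : {x // x ∈ Xs} => asgn (k-1) Ys eY σ ⟨v.1, hXY v.2⟩) = asgn (k-1) Xs eX σ := by
      intro σ
      funext x
      show valB (holeFun (k-1) (Ys.image TVar.pigeon) eY σ) x.1
        = valB (holeFun (k-1) (Xs.image TVar.pigeon) eX σ) x.1
      apply valB_congr
      have hp : x.1.pigeon ∈ Xs.image TVar.pigeon := Finset.mem_image_of_mem _ x.2
      unfold holeFun
      rw [dif_pos (hPg hp), dif_pos hp, heX]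
      rfl
    have key : cnt (k-1) Xs eX μ = ∑ η : {x // x ∈ Ys} → Bool,
        (if (fun v : {x // x ∈ Xs} => η ⟨v.1, hXY v.2⟩) = μ then cnt (k-1) Ys eY η else 0) := by
      unfold cnt
      have hfe : (Finset.univ.filter fun σ : Equiv.Perm (Fin (k-1)) => asgn (k-1) Xs eX σ = μ)
          = Finset.univ.filter
            (fun σ => (fun v : {x // x ∈ Xs} => asgn (k-1) Ys eY σ ⟨v.1, hXY v.2⟩) = μ) := by
        apply Finset.filter_congr
        intro σ _
        rw [← hres σ]
      rw [hfe]
      rw [Finset.card_eq_sum_card_fiberwise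
        (f := asgn (k-1) Ys eY) (t := Finset.univ) (fun σ _ => Finset.mem_univ _)]
      refine Finset.sum_congr rfl fun η _ => ?_
      by_cases hc : (fun v : {x // x ∈ Xs} => η ⟨v.1, hXY v.2⟩) = μ
      · rw [if_pos hc]
        congr 1
        ext σ
        simp only [Finset.mem_filter, Finset.mem_univ, true_and]
        constructor
        · rintro ⟨h1, h2⟩
          exact h2
        · intro h2
          refine ⟨?_, h2⟩
          rw [h2]
          exact hc
      · rw [if_neg hc]
        rw [Finset.card_eq_zero]
        ext σ
        simp only [Finset.mem_filter, Finset.mem_univ, true_and, Finset.notMem_empty,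
          iff_false, not_and]
        intro h1 h2
        rw [h2] at h1
        exact absurd h1 hc
    simp only [PiD, dif_pos hXc, dif_pos hYc]
    rw [cnt_eq (k-1) Xs (embOf (k-1) (Xs.image TVar.pigeon) hXc) eX μ, key, Nat.cast_sum,
      Finset.sum_div]
    refine Finset.sum_congr rfl fun η _ => ?_
    split <;> simp [heY]


end NarrowProofs
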